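/- Let l ⊆ g(-1) be any subspace isotropic for the restriction of ω_χ to g(-1), and set m := l ⊕ ⊕_{i ≤ -2} g(i). Then m is a Lie subalgebra of g, every element of m is ad-nilpotent, and χ vanishes on [m,m] (so χ restricts to a Lie algebra character of m). -/

import Mathlib

open Module LieAlgebra

set_option linter.unusedSectionVars false
set_option maxHeartbeats 1000000

section AuxChi

variable {K : Type*} [Field K] [CharZero K]
variable {g : Type*} [LieRing g] [LieAlgebra K g] [FiniteDimensional K g]

/-- The graded pieces `⊕_{i ≤ p} g(i)` of the eigenspace decomposition for `ad h`. -/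
def auxG (K : Type*) [Field K] {g : Type*} [LieRing g] [LieAlgebra K g] (h : g) (p : ℤ) :
    Submodule K g :=
  ⨆ i : ℤ, ⨆ _ : i ≤ p, Module.End.eigenspace (LieAlgebra.ad K g h) (i : K)

lemma auxG_mono (h : g) {p q : ℤ} (hpq : p ≤ q) : auxG K h p ≤ auxG K h q := by
  refine iSup₂_le fun i hi => ?_
  exact le_iSup₂ (f := fun i (_ : i ≤ q) => Module.End.eigenspace (LieAlgebra.ad K g h) (i : K))
    i (hi.trans hpq)

lemma aux_mem_G (h : g) {p i : ℤ} (hip : i ≤ p) {x : g}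
    (hx : x ∈ Module.End.eigenspace (LieAlgebra.ad K g h) (i : K)) : x ∈ auxG K h p :=
  (le_iSup₂ (f := fun i (_ : i ≤ p) => Module.End.eigenspace (LieAlgebra.ad K g h) (i : K))
    i hip) hx

lemma aux_eig_lie (h : g) {a b : K} {x y : g}
    (hx : x ∈ Module.End.eigenspace (LieAlgebra.ad K g h) a)
    (hy : y ∈ Module.End.eigenspace (LieAlgebra.ad K g h) b) :
    ⁅x, y⁆ ∈ Module.End.eigenspace (LieAlgebra.ad K g h) (a + b) := by
  rw [Module.End.mem_eigenspace_iff] at hx hy ⊢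
  simp only [ad_apply] at hx hy ⊢
  rw [leibniz_lie, hx, hy, smul_lie, lie_smul, add_smul]

lemma aux_lie_G (h : g) {p q : ℤ} {x y : g} (hx : x ∈ auxG K h p) (hy : y ∈ auxG K h q) :
    ⁅x, y⁆ ∈ auxG K h (p + q) := by
  rw [auxG, iSup_subtype'] at hx hy
  induction hx using Submodule.iSup_induction' with
  | mem i x hx =>
    induction hy using Submodule.iSup_induction' with
    | mem j y hy =>
      have hkey := aux_eig_lie h hx hy
      have hc : ((i : ℤ) : K) + ((j : ℤ) : K) = (((i : ℤ) + (j : ℤ) : ℤ) : K) := by push_cast; ring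
      rw [hc] at hkey
      exact aux_mem_G h (add_le_add i.2 j.2) hkey
    | zero => simp
    | add y z _ _ hy hz => rw [lie_add]; exact Submodule.add_mem _ hy hz
  | zero => simp
  | add x z _ _ hx hz => rw [add_lie]; exact Submodule.add_mem _ hx hz

lemma aux_lie_G' (h : g) {p q r : ℤ} (hr : p + q = r) {x y : g}
    (hx : x ∈ auxG K h p) (hy : y ∈ auxG K h q) : ⁅x, y⁆ ∈ auxG K h r :=
  hr ▸ aux_lie_G h hx hy

lemma aux_chi (h e : g) (hhe : ⁅h, e⁆ = (2 : K) • e) {c : K} (hc : c ≠ -2) {z : g}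
    (hz : z ∈ Module.End.eigenspace (LieAlgebra.ad K g h) c) :
    killingForm K g e z = 0 := by
  have h1 : killingForm K g ⁅e, h⁆ z = killingForm K g e ⁅h, z⁆ :=
    LieModule.traceForm_apply_lie_apply K g g e h z
  have h2 : ⁅e, h⁆ = (-2 : K) • e := by
    rw [← lie_skew, hhe]; module
  have h3 : ⁅h, z⁆ = c • z := by
    have := Module.End.mem_eigenspace_iff.mp hz
    simpa [ad_apply] using this
  rw [h2, h3, map_smul, LinearMap.smul_apply, map_smul] at h1
  have h4 : (c + 2) * killingForm K g e z = 0 := by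
    have h6 : (-2 : K) * killingForm K g e z = c * killingForm K g e z := by
      simpa [smul_eq_mul] using h1
    linear_combination -h6
  rcases mul_eq_zero.mp h4 with h5 | h5
  · exact absurd (by linear_combination h5 : c = -2) hc
  · exact h5

lemma aux_ker_chi (h e : g) (hhe : ⁅h, e⁆ = (2 : K) • e) {z : g} (hz : z ∈ auxG K h (-3)) :
    killingForm K g e z = 0 := by
  have : auxG K h (-3) ≤ LinearMap.ker (killingForm K g e) := by
    refine iSup₂_le fun i hi => fun w hw => ?_
    have hne : ((i : ℤ) : K) ≠ -2 := by
      intro hcon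
      have : (i : ℤ) = -2 := by exact_mod_cast hcon.trans (by norm_num : (-2 : K) = ((-2 : ℤ) : K))
      omega
    simpa using aux_chi h e hhe hne hw
  simpa using this hz

lemma aux_nilpotent [IsAlgClosed K] (h : g) {x : g} (hx : x ∈ auxG K h (-1)) :
    IsNilpotent (LieAlgebra.ad K g x) := by
  set D : Module.End K g := LieAlgebra.ad K g h with hD
  have hfin : {μ : K | D.maxGenEigenspace μ ≠ ⊥}.Finite :=
    WellFoundedGT.finite_ne_bot_of_iSupIndep D.independent_maxGenEigenspace
  set W : K → ℕ → Submodule K g := fun μ₀ n =>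
    ⨆ i : {i : ℤ // i ≤ -(n : ℤ)}, D.maxGenEigenspace (μ₀ + (i : ℤ)) with hW
  have step : ∀ y ∈ auxG K h (-1), ∀ (μ₀ : K) (n : ℕ), ∀ v ∈ W μ₀ n, ⁅y, v⁆ ∈ W μ₀ (n + 1) := by
    intro y hy
    rw [auxG, iSup_subtype'] at hy
    induction hy using Submodule.iSup_induction' with
    | mem j y hy =>
      intro μ₀ n v hv
      induction hv using Submodule.iSup_induction' with
      | mem i v hv =>
        have hy' : y ∈ D.maxGenEigenspace ((j : ℤ) : K) :=
          Module.End.genEigenspace_le_maximal D _ 1 hy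
        have key : ⁅y, v⁆ ∈ D.maxGenEigenspace (((j : ℤ) : K) + (μ₀ + ((i : ℤ) : K))) :=
          LieModule.lie_mem_maxGenEigenspace_toEnd hy' hv
        have hc : ((j : ℤ) : K) + (μ₀ + ((i : ℤ) : K)) = μ₀ + (((i : ℤ) + (j : ℤ) : ℤ) : K) := by
          push_cast; ring
        rw [hc] at key
        exact le_iSup (fun i : {i : ℤ // i ≤ -((n + 1 : ℕ) : ℤ)} =>
          D.maxGenEigenspace (μ₀ + (i : ℤ)))
          ⟨(i : ℤ) + (j : ℤ), by have := i.2; have := j.2; push_cast; omega⟩ key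
      | zero => simp
      | add v w _ _ hv hw => rw [lie_add]; exact Submodule.add_mem _ hv hw
    | zero => intro μ₀ n v hv; simp
    | add y z _ _ hy hz =>
      intro μ₀ n v hv
      rw [add_lie]; exact Submodule.add_mem _ (hy μ₀ n v hv) (hz μ₀ n v hv)
  have vanish : ∀ μ₀ : K, ∃ n : ℕ, W μ₀ n = ⊥ := by
    intro μ₀
    have hinj : Set.InjOn (fun i : ℤ => μ₀ + (i : K))
        {i | D.maxGenEigenspace (μ₀ + (i : K)) ≠ ⊥} := by
      intro a _ b _ hab
      simp only [add_right_inj] at hab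
      exact_mod_cast hab
    have hSfin : {i : ℤ | D.maxGenEigenspace (μ₀ + (i : K)) ≠ ⊥}.Finite := by
      have hsub : ((fun i : ℤ => μ₀ + (i : K)) '' {i | D.maxGenEigenspace (μ₀ + (i : K)) ≠ ⊥}) ⊆
          {μ : K | D.maxGenEigenspace μ ≠ ⊥} := by
        rintro - ⟨i, hi, rfl⟩; exact hi
      exact Set.Finite.of_finite_image (hfin.subset hsub) hinj
    obtain ⟨b, hb⟩ := hSfin.bddBelow
    obtain ⟨n, hn⟩ : ∃ n : ℕ, -(n : ℤ) < b := by
      obtain ⟨n, hn⟩ := exists_nat_gt (-b)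
      exact ⟨n, by omega⟩
    refine ⟨n, ?_⟩
    rw [hW]
    simp only [iSup_eq_bot]
    rintro ⟨i, hi⟩
    by_contra hne
    have : b ≤ i := hb hne
    omega
  have main : ∀ v : g, ∃ n : ℕ, ((LieAlgebra.ad K g x) ^ n) v = 0 := by
    intro v
    have hv : v ∈ ⨆ μ : K, D.maxGenEigenspace μ := by
      rw [Module.End.iSup_maxGenEigenspace_eq_top]; trivial
    induction hv using Submodule.iSup_induction' with
    | mem μ₀ v hv =>
      obtain ⟨n, hn⟩ := vanish μ₀
      refine ⟨n, ?_⟩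
      have hall : ∀ k : ℕ, ((LieAlgebra.ad K g x) ^ k) v ∈ W μ₀ k := by
        intro k
        induction k with
        | zero =>
          simpa [hW] using le_iSup (fun i : {i : ℤ // i ≤ -((0 : ℕ) : ℤ)} =>
            D.maxGenEigenspace (μ₀ + (i : ℤ)))
            ⟨0, by norm_num⟩ (by simpa using hv)
        | succ k ih =>
          rw [pow_succ', Module.End.mul_apply]
          exact step x hx μ₀ k _ ih
      have := hall n
      rw [hn] at this
      simpa using this
    | zero => exact ⟨0, by simp⟩
    | add v w _ _ hv hw =>
      obtain ⟨n1, h1⟩ := hv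
      obtain ⟨n2, h2⟩ := hw
      refine ⟨max n1 n2, ?_⟩
      rw [map_add, Module.End.pow_map_zero_of_le (le_max_left n1 n2) h1,
        Module.End.pow_map_zero_of_le (le_max_right n1 n2) h2, add_zero]
  exact ((LinearMap.charpoly_nilpotent_tfae (LieAlgebra.ad K g x)).out 2 0).mp main

end AuxChi

/-- Let `l ⊆ g(-1)` be any subspace isotropic for the restriction of `ω_χ` to
`g(-1)`, and set `m := l ⊕ ⊕_{i ≤ -2} g(i)`. Then `m` is a Lie subalgebra of `g`, every
element of `m` is ad-nilpotent, and `χ` vanishes on `[m, m]` (so `χ` restricts to a Lie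
algebra character of `m`). -/
theorem m_subalgebra_nilpotent_chi_character
    (K : Type*) [Field K] [IsAlgClosed K] [CharZero K]
    (g : Type*) [LieRing g] [LieAlgebra K g] [FiniteDimensional K g]
    [LieAlgebra.IsSemisimple K g]
    (e h f : g) (he : e ≠ 0)
    (hhe : ⁅h, e⁆ = (2 : K) • e) (hhf : ⁅h, f⁆ = (-2 : K) • f) (hef : ⁅e, f⁆ = h)
    (l : Submodule K g)
    (hl : l ≤ Module.End.eigenspace (LieAlgebra.ad K g h) ((-1 : ℤ) : K))
    (hiso : ∀ x ∈ l, ∀ y ∈ l, killingForm K g e ⁅x, y⁆ = 0)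
    (m : Submodule K g)
    (hm : m = l ⊔ ⨆ i : ℤ, ⨆ _ : i ≤ -2,
      Module.End.eigenspace (LieAlgebra.ad K g h) (i : K)) :
    (∀ x ∈ m, ∀ y ∈ m, ⁅x, y⁆ ∈ m) ∧
    (∀ x ∈ m, IsNilpotent (LieAlgebra.ad K g x)) ∧
    (∀ x ∈ m, ∀ y ∈ m, killingForm K g e ⁅x, y⁆ = 0) := by
  have hm' : m = l ⊔ auxG K h (-2) := by rw [hm]; simp only [auxG]
  have hlG : l ≤ auxG K h (-1) := fun x hx => aux_mem_G h (by norm_num) (hl hx)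
  have hNm : auxG K h (-2) ≤ m := hm' ▸ le_sup_right
  have hmG : m ≤ auxG K h (-1) := by
    rw [hm']
    exact sup_le hlG (auxG_mono h (by norm_num))
  -- decomposition of elements of m
  have hdec : ∀ x ∈ m, ∃ xl ∈ l, ∃ xn ∈ auxG K h (-2), x = xl + xn := by
    intro x hx
    rw [hm'] at hx
    obtain ⟨xl, hxl, xn, hxn, hx⟩ := Submodule.mem_sup.mp hx
    exact ⟨xl, hxl, xn, hxn, hx.symm⟩
  -- the key bracket decomposition
  have hbrack : ∀ x ∈ m, ∀ y ∈ m, ∃ xl ∈ l, ∃ yl ∈ l, ∃ r ∈ auxG K h (-3),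
      ⁅x, y⁆ = ⁅xl, yl⁆ + r := by
    intro x hx y hy
    obtain ⟨xl, hxl, xn, hxn, rfl⟩ := hdec x hx
    obtain ⟨yl, hyl, yn, hyn, rfl⟩ := hdec y hy
    have heq : ⁅xl + xn, yl + yn⁆ = ⁅xl, yl⁆ + (⁅xl, yn⁆ + ⁅xn, yl⁆ + ⁅xn, yn⁆) := by
      rw [add_lie, lie_add, lie_add]; abel
    refine ⟨xl, hxl, yl, hyl, ⁅xl, yn⁆ + ⁅xn, yl⁆ + ⁅xn, yn⁆, ?_, heq⟩
    have h1 : ⁅xl, yn⁆ ∈ auxG K h (-3) := aux_lie_G' h (by norm_num) (hlG hxl) hyn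
    have h2 : ⁅xn, yl⁆ ∈ auxG K h (-3) := aux_lie_G' h (by norm_num) hxn (hlG hyl)
    have h3 : ⁅xn, yn⁆ ∈ auxG K h (-3) :=
      auxG_mono h (by norm_num) (aux_lie_G' h (by norm_num : (-2:ℤ) + -2 = -4) hxn hyn)
    exact Submodule.add_mem _ (Submodule.add_mem _ h1 h2) h3
  refine ⟨?_, ?_, ?_⟩
  · -- subalgebra
    intro x hx y hy
    obtain ⟨xl, hxl, yl, hyl, r, hr, hxy⟩ := hbrack x hx y hy
    rw [hxy]
    have h1 : ⁅xl, yl⁆ ∈ auxG K h (-2) := by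
      have := aux_eig_lie h (hl hxl) (hl hyl)
      have hc : ((-1 : ℤ) : K) + ((-1 : ℤ) : K) = ((-2 : ℤ) : K) := by push_cast; ring
      rw [hc] at this
      exact aux_mem_G h le_rfl this
    exact Submodule.add_mem _ (hNm h1) (hNm (auxG_mono h (by norm_num) hr))
  · -- nilpotency
    intro x hx
    exact aux_nilpotent h (hmG hx)
  · -- chi vanishes
    intro x hx y hy
    obtain ⟨xl, hxl, yl, hyl, r, hr, hxy⟩ := hbrack x hx y hy
    rw [hxy, map_add, hiso xl hxl yl hyl, aux_ker_chi h e hhe hr, add_zero]
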